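/- If f: Dⁿ → ℝ is α-bisubmodular and x ∈ [-α,1]ⁿ, then any probability distribution μ with marginal x minimizing Σ_a λ(a)f(a) over distributions λ with marginal x and, among such minimizers, maximizing Σ_a λ(a)z(a)², must have support forming a chain in Dⁿ, hence equals the unique chain-supported distribution λ_x. -/

import Mathlib

open Finset

/-- The three-element domain `D = {-α, 0, 1}`, abstractly. -/
inductive D3 : Type
  | neg : D3
  | zero : D3
  | one : D3
deriving DecidableEq

instance : Fintype D3 :=
  ⟨{D3.neg, D3.zero, D3.one}, by rintro (_ | _ | _) <;> simp⟩

namespace D3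

/-- The embedding of `D3` into `ℝ` sending `neg ↦ -α`, `zero ↦ 0`, `one ↦ 1`. -/
def emb (α : ℝ) : D3 → ℝ
  | neg => -α
  | zero => 0
  | one => 1

/-- The partial order `0 ≺ 1`, `0 ≺ -α`, with `1` and `-α` incomparable. -/
instance : PartialOrder D3 where
  le x y := x = y ∨ x = zero
  le_refl x := Or.inl rfl
  le_trans x y z hxy hyz := by
    rcases hxy with rfl | rfl
    · exact hyz
    · exact Or.inr rfl
  le_antisymm x y hxy hyx := by
    rcases hxy with rfl | rfl
    · rfl
    · rcases hyx with rfl | rfl <;> rfl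

/-- `∧₀` : `1 ∧₀ (-α) = (-α) ∧₀ 1 = 0`, and min w.r.t. `≺` otherwise. -/
def meet0 (x y : D3) : D3 := if x = y then x else zero

/-- `∨₀` : `1 ∨₀ (-α) = (-α) ∨₀ 1 = 0`, and max w.r.t. `≺` otherwise. -/
def join0 (x y : D3) : D3 :=
  if x = y then x else if x = zero then y else if y = zero then x else zero

/-- `∨₁` : `1 ∨₁ (-α) = (-α) ∨₁ 1 = 1`, and max w.r.t. `≺` otherwise. -/
def join1 (x y : D3) : D3 :=
  if x = y then x else if x = zero then y else if y = zero then x else one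

end D3

/-- Componentwise `∧₀` on `Dⁿ`. -/
def vmeet0 {n : ℕ} (a b : Fin n → D3) : Fin n → D3 := fun i => D3.meet0 (a i) (b i)

/-- Componentwise `∨₀` on `Dⁿ`. -/
def vjoin0 {n : ℕ} (a b : Fin n → D3) : Fin n → D3 := fun i => D3.join0 (a i) (b i)

/-- Componentwise `∨₁` on `Dⁿ`. -/
def vjoin1 {n : ℕ} (a b : Fin n → D3) : Fin n → D3 := fun i => D3.join1 (a i) (b i)

/-- `lam` is a probability distribution on `Dⁿ`. -/
def IsDist (n : ℕ) (lam : (Fin n → D3) → ℝ) : Prop :=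
  (∀ a, 0 ≤ lam a ∧ lam a ≤ 1) ∧ ∑ a : Fin n → D3, lam a = 1

/-- `lam` has marginal vector `x`, i.e. `Σ_a lam(a)·a = x` in `ℝⁿ`. -/
def HasMarginal (α : ℝ) (n : ℕ) (lam : (Fin n → D3) → ℝ) (x : Fin n → ℝ) : Prop :=
  ∀ i, ∑ a : Fin n → D3, lam a * D3.emb α (a i) = x i

/-- The support of `lam` forms a chain w.r.t. the componentwise order on `Dⁿ`. -/
def ChainSupp (n : ℕ) (lam : (Fin n → D3) → ℝ) : Prop :=
  ∀ a b : Fin n → D3, lam a ≠ 0 → lam b ≠ 0 → a ≤ b ∨ b ≤ a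

/-- The box `[-α,1]ⁿ`. -/
def Box (α : ℝ) (n : ℕ) : Set (Fin n → ℝ) := {x | ∀ i, x i ∈ Set.Icc (-α) 1}

/-- `f : Dⁿ → ℝ` is α-bisubmodular. -/
def AlphaBisub (α : ℝ) (n : ℕ) (f : (Fin n → D3) → ℝ) : Prop :=
  ∀ a b : Fin n → D3,
    f (vmeet0 a b) + α * f (vjoin0 a b) + (1 - α) * f (vjoin1 a b) ≤ f a + f b

/-- Number of zero coordinates. -/
def zc {n : ℕ} (c : Fin n → D3) : ℕ := (Finset.univ.filter fun i => c i = D3.zero).card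

/-- The convex closure `f⁻(x)`. -/
noncomputable def cClos (α : ℝ) (n : ℕ) (f : (Fin n → D3) → ℝ) (x : Fin n → ℝ) : ℝ :=
  sInf {y | ∃ lam, IsDist n lam ∧ HasMarginal α n lam x ∧ y = ∑ a : Fin n → D3, lam a * f a}
-- aux lemmas part 1
open Finset D3

lemma D3.le_iff (u v : D3) : u ≤ v ↔ (u = v ∨ u = D3.zero) := Iff.rfl

lemma pi_le_iff {n : ℕ} (a b : Fin n → D3) : a ≤ b ↔ ∀ i, a i = b i ∨ a i = D3.zero := by
  constructor
  · intro h i; exact h i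
  · intro h i; exact h i

lemma emb_id (α : ℝ) (u v : D3) :
    D3.emb α (D3.meet0 u v) + α * D3.emb α (D3.join0 u v) + (1 - α) * D3.emb α (D3.join1 u v)
      = D3.emb α u + D3.emb α v := by
  cases u <;> cases v <;> simp [D3.meet0, D3.join0, D3.join1, D3.emb] <;> ring

/-- the perturbation coefficient function -/
noncomputable def gfun (α : ℝ) {n : ℕ} (a b : Fin n → D3) (c : Fin n → D3) : ℝ :=
  (if c = vmeet0 a b then (1:ℝ) else 0) + α * (if c = vjoin0 a b then 1 else 0)
    + (1 - α) * (if c = vjoin1 a b then 1 else 0)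
    - (if c = a then 1 else 0) - (if c = b then 1 else 0)

lemma sum_gfun (α : ℝ) {n : ℕ} (a b : Fin n → D3) (h : (Fin n → D3) → ℝ) :
    ∑ c : Fin n → D3, gfun α a b c * h c
      = h (vmeet0 a b) + α * h (vjoin0 a b) + (1 - α) * h (vjoin1 a b) - h a - h b := by
  simp only [gfun, sub_mul, add_mul, mul_assoc, ite_mul, one_mul, zero_mul,
    Finset.sum_sub_distrib, Finset.sum_add_distrib, Finset.mul_sum,
    Finset.sum_ite_eq, Finset.mem_univ, if_true]
  rw [← Finset.mul_sum, ← Finset.mul_sum]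
  simp [Finset.sum_ite_eq, Finset.mem_univ]
-- counting
def cP {n : ℕ} (a b : Fin n → D3) : ℕ :=
  (Finset.univ.filter fun i => a i = D3.zero ∧ b i = D3.zero).card
def cQA {n : ℕ} (a b : Fin n → D3) : ℕ :=
  (Finset.univ.filter fun i => a i = D3.zero ∧ b i ≠ D3.zero).card
def cQB {n : ℕ} (a b : Fin n → D3) : ℕ :=
  (Finset.univ.filter fun i => a i ≠ D3.zero ∧ b i = D3.zero).card
def cT {n : ℕ} (a b : Fin n → D3) : ℕ :=
  (Finset.univ.filter fun i => a i ≠ D3.zero ∧ b i ≠ D3.zero ∧ a i ≠ b i).card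

lemma zc_meet {n : ℕ} (a b : Fin n → D3) :
    zc (vmeet0 a b) = cP a b + cQA a b + cQB a b + cT a b := by
  unfold zc cP cQA cQB cT vmeet0
  simp only [Finset.card_filter]
  rw [← Finset.sum_add_distrib, ← Finset.sum_add_distrib, ← Finset.sum_add_distrib]
  refine Finset.sum_congr rfl fun i _ => ?_
  rcases ha : a i <;> rcases hb : b i <;> simp [D3.meet0]

lemma zc_join0 {n : ℕ} (a b : Fin n → D3) :
    zc (vjoin0 a b) = cP a b + cT a b := by
  unfold zc cP cT vjoin0
  simp only [Finset.card_filter]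
  rw [← Finset.sum_add_distrib]
  refine Finset.sum_congr rfl fun i _ => ?_
  rcases ha : a i <;> rcases hb : b i <;> simp [D3.join0]

lemma zc_join1 {n : ℕ} (a b : Fin n → D3) :
    zc (vjoin1 a b) = cP a b := by
  unfold zc cP vjoin1
  simp only [Finset.card_filter]
  refine Finset.sum_congr rfl fun i _ => ?_
  rcases ha : a i <;> rcases hb : b i <;> simp [D3.join1]

lemma zc_a {n : ℕ} (a b : Fin n → D3) : zc a = cP a b + cQA a b := by
  unfold zc cP cQA
  simp only [Finset.card_filter]
  rw [← Finset.sum_add_distrib]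
  refine Finset.sum_congr rfl fun i _ => ?_
  rcases ha : a i <;> rcases hb : b i <;> simp

lemma zc_b {n : ℕ} (a b : Fin n → D3) : zc b = cP a b + cQB a b := by
  unfold zc cP cQB
  simp only [Finset.card_filter]
  rw [← Finset.sum_add_distrib]
  refine Finset.sum_congr rfl fun i _ => ?_
  rcases ha : a i <;> rcases hb : b i <;> simp

lemma incomp_QB {n : ℕ} {a b : Fin n → D3} (h : ¬ a ≤ b) : 1 ≤ cQB a b + cT a b := by
  rw [pi_le_iff] at h
  push_neg at h
  obtain ⟨i, hne, h0⟩ := h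
  by_cases hb : b i = D3.zero
  · have : i ∈ Finset.univ.filter fun i => a i ≠ D3.zero ∧ b i = D3.zero := by
      simp [h0, hb]
    have := Finset.card_pos.mpr ⟨i, this⟩
    unfold cQB cT; omega
  · have : i ∈ Finset.univ.filter fun i => a i ≠ D3.zero ∧ b i ≠ D3.zero ∧ a i ≠ b i := by
      simp [h0, hb, hne]
    have := Finset.card_pos.mpr ⟨i, this⟩
    unfold cQB cT; omega
lemma cQB_swap {n : ℕ} (a b : Fin n → D3) : cQB b a = cQA a b := by
  unfold cQB cQA
  congr 1
  apply Finset.filter_congr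
  intro i _
  tauto

lemma cT_swap {n : ℕ} (a b : Fin n → D3) : cT b a = cT a b := by
  unfold cT
  congr 1
  apply Finset.filter_congr
  intro i _
  constructor
  · rintro ⟨h1, h2, h3⟩; exact ⟨h2, h1, fun h => h3 h.symm⟩
  · rintro ⟨h1, h2, h3⟩; exact ⟨h2, h1, fun h => h3 h.symm⟩

lemma zsq_gain {α : ℝ} (hα0 : 0 < α) (hα1 : α ≤ 1) {n : ℕ} {a b : Fin n → D3}
    (hab : ¬ a ≤ b) (hba : ¬ b ≤ a) :
    (zc a : ℝ) ^ 2 + (zc b : ℝ) ^ 2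
      < (zc (vmeet0 a b) : ℝ) ^ 2 + α * (zc (vjoin0 a b) : ℝ) ^ 2
        + (1 - α) * (zc (vjoin1 a b) : ℝ) ^ 2 := by
  have h1 := incomp_QB hab
  have h2 := incomp_QB hba
  rw [cQB_swap, cT_swap] at h2
  clear hab hba
  rw [zc_meet, zc_join0, zc_join1, zc_a a b, zc_b a b]
  set p := cP a b with hp
  set qa := cQA a b
  set qb := cQB a b
  set t := cT a b
  have hp' : (0:ℝ) ≤ (p:ℝ) := Nat.cast_nonneg _
  have hqa' : (0:ℝ) ≤ (qa:ℝ) := Nat.cast_nonneg _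
  have hqb' : (0:ℝ) ≤ (qb:ℝ) := Nat.cast_nonneg _
  have ht' : (0:ℝ) ≤ (t:ℝ) := Nat.cast_nonneg _
  have h1' : (1:ℝ) ≤ (qb:ℝ) + t := by exact_mod_cast h1
  have h2' : (1:ℝ) ≤ (qa:ℝ) + t := by exact_mod_cast h2
  have key : (1:ℝ) ≤ ((qa:ℝ) + t) * ((qb:ℝ) + t) := by nlinarith
  push_cast
  nlinarith [mul_nonneg hp' ht', mul_nonneg hqa' hqb', mul_nonneg hqa' ht',
    mul_nonneg hqb' ht', sq_nonneg (t:ℝ), mul_pos hα0 (lt_of_lt_of_le one_pos key)]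
lemma meet_ne_left {n : ℕ} {a b : Fin n → D3} (h : ¬ a ≤ b) : vmeet0 a b ≠ a := by
  intro he
  apply h
  rw [pi_le_iff]
  intro i
  have hi : D3.meet0 (a i) (b i) = a i := congrFun he i
  by_cases hv : a i = b i
  · exact Or.inl hv
  · right
    rw [D3.meet0, if_neg hv] at hi
    exact hi.symm

lemma meet_ne_right {n : ℕ} {a b : Fin n → D3} (h : ¬ b ≤ a) : vmeet0 a b ≠ b := by
  intro he
  apply h
  rw [pi_le_iff]
  intro i
  have hi : D3.meet0 (a i) (b i) = b i := congrFun he i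
  by_cases hv : a i = b i
  · exact Or.inl hv.symm
  · right
    rw [D3.meet0, if_neg hv] at hi
    exact hi.symm

lemma dist_le_one {n : ℕ} {μ : (Fin n → D3) → ℝ} (hnn : ∀ c, 0 ≤ μ c)
    (hs : ∑ c : Fin n → D3, μ c = 1) (c : Fin n → D3) : μ c ≤ 1 := by
  rw [← hs]
  exact Finset.single_le_sum (fun c _ => hnn c) (Finset.mem_univ c)

lemma gfun_lb {α : ℝ} (hα0 : 0 ≤ α) (hα1 : α ≤ 1) {n : ℕ} (a b c : Fin n → D3) :
    -((if c = a then (1:ℝ) else 0) + (if c = b then 1 else 0)) ≤ gfun α a b c := by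
  unfold gfun
  have t1 : (0:ℝ) ≤ (if c = vmeet0 a b then (1:ℝ) else 0) := by split <;> norm_num
  have t2 : (0:ℝ) ≤ α * (if c = vjoin0 a b then (1:ℝ) else 0) :=
    mul_nonneg hα0 (by split <;> norm_num)
  have t3 : (0:ℝ) ≤ (1 - α) * (if c = vjoin1 a b then (1:ℝ) else 0) :=
    mul_nonneg (by linarith) (by split <;> norm_num)
  linarith

lemma chain_of_opt (α : ℝ) (hα : α ∈ Set.Ioc (0 : ℝ) 1) (n : ℕ) (f : (Fin n → D3) → ℝ)
    (hf : AlphaBisub α n f) (x : Fin n → ℝ)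
    (mu : (Fin n → D3) → ℝ)
    (h1 : IsDist n mu) (h2 : HasMarginal α n mu x)
    (hmin : ∀ lam : (Fin n → D3) → ℝ, IsDist n lam → HasMarginal α n lam x →
      ∑ a : Fin n → D3, mu a * f a ≤ ∑ a : Fin n → D3, lam a * f a)
    (hmax : ∀ lam : (Fin n → D3) → ℝ, IsDist n lam → HasMarginal α n lam x →
      (∀ lam' : (Fin n → D3) → ℝ, IsDist n lam' → HasMarginal α n lam' x →
        ∑ a : Fin n → D3, lam a * f a ≤ ∑ a : Fin n → D3, lam' a * f a) →
      ∑ a : Fin n → D3, lam a * (zc a : ℝ) ^ 2 ≤ ∑ a : Fin n → D3, mu a * (zc a : ℝ) ^ 2) :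
    ChainSupp n mu := by
  obtain ⟨hα0, hα1⟩ := hα
  intro a b ha hb
  by_contra hcon
  rw [not_or] at hcon
  obtain ⟨hab, hba⟩ := hcon
  have hne : a ≠ b := by rintro rfl; exact hab le_rfl
  have hma : vmeet0 a b ≠ a := meet_ne_left hab
  have hmb : vmeet0 a b ≠ b := meet_ne_right hba
  have hgain := zsq_gain hα0 hα1 hab hba
  clear hab hba
  have hmua : 0 < mu a := lt_of_le_of_ne (h1.1 a).1 (Ne.symm ha)
  have hmub : 0 < mu b := lt_of_le_of_ne (h1.1 b).1 (Ne.symm hb)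
  set ε := min (mu a) (mu b) with hεdef
  have hε : 0 < ε := lt_min hmua hmub
  set mu' : (Fin n → D3) → ℝ := fun c => mu c + ε * gfun α a b c with hmu'
  have hsum : ∀ h : (Fin n → D3) → ℝ, ∑ c : Fin n → D3, mu' c * h c
      = (∑ c : Fin n → D3, mu c * h c)
        + ε * (h (vmeet0 a b) + α * h (vjoin0 a b) + (1 - α) * h (vjoin1 a b) - h a - h b) := by
    intro h
    simp only [hmu', add_mul, Finset.sum_add_distrib, mul_assoc]
    rw [← Finset.mul_sum, sum_gfun]
  have hnn : ∀ c, 0 ≤ mu' c := by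
    intro c
    have hlb := gfun_lb hα0.le hα1 a b c
    show 0 ≤ mu c + ε * gfun α a b c
    rcases eq_or_ne c a with hca | hca
    · have he : (if c = a then (1:ℝ) else 0) + (if c = b then 1 else 0) = 1 := by
        rw [if_pos hca, if_neg (by rw [hca]; exact hne)]; ring
      rw [he] at hlb
      have h2' : ε * (-1) ≤ ε * gfun α a b c := mul_le_mul_of_nonneg_left hlb hε.le
      have h3' : ε ≤ mu c := by rw [hca]; exact min_le_left (mu a) (mu b)
      linarith only [h2', h3']
    · rcases eq_or_ne c b with hcb | hcb
      · have he : (if c = a then (1:ℝ) else 0) + (if c = b then 1 else 0) = 1 := by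
          rw [if_pos hcb, if_neg hca]; ring
        rw [he] at hlb
        have h2' : ε * (-1) ≤ ε * gfun α a b c := mul_le_mul_of_nonneg_left hlb hε.le
        have h3' : ε ≤ mu c := by rw [hcb]; exact min_le_right (mu a) (mu b)
        linarith only [h2', h3']
      · rw [if_neg hca, if_neg hcb] at hlb
        have h2' : 0 ≤ ε * gfun α a b c :=
          mul_nonneg hε.le (by linarith only [hlb])
        have h4' := (h1.1 c).1
        linarith only [h2', h4']
  have hsum1 : ∑ c : Fin n → D3, mu' c = 1 := by
    have hh := hsum (fun _ => (1:ℝ))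
    simp only [mul_one] at hh
    rw [hh, h1.2]
    ring
  have hdist' : IsDist n mu' := ⟨fun c => ⟨hnn c, dist_le_one hnn hsum1 c⟩, hsum1⟩
  have hmarg' : HasMarginal α n mu' x := by
    intro i
    have hh := hsum (fun c => D3.emb α (c i))
    have hemb := emb_id α (a i) (b i)
    have hz0 : D3.emb α ((vmeet0 a b) i) + α * D3.emb α ((vjoin0 a b) i)
        + (1 - α) * D3.emb α ((vjoin1 a b) i) - D3.emb α (a i) - D3.emb α (b i) = 0 := by
      show D3.emb α (D3.meet0 (a i) (b i)) + α * D3.emb α (D3.join0 (a i) (b i))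
        + (1 - α) * D3.emb α (D3.join1 (a i) (b i)) - D3.emb α (a i) - D3.emb α (b i) = 0
      linarith only [hemb]
    rw [hh, hz0, mul_zero, add_zero, h2 i]
  have hfle : ∑ c : Fin n → D3, mu' c * f c ≤ ∑ c : Fin n → D3, mu c * f c := by
    have hh := hsum f
    have hbi := hf a b
    have hq : ε * (f (vmeet0 a b) + α * f (vjoin0 a b) + (1 - α) * f (vjoin1 a b) - f a - f b) ≤ 0 :=
      mul_nonpos_of_nonneg_of_nonpos hε.le (by linarith only [hbi])
    rw [hh]
    linarith only [hq]
  have hmin' : ∀ lam : (Fin n → D3) → ℝ, IsDist n lam → HasMarginal α n lam x →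
      ∑ c : Fin n → D3, mu' c * f c ≤ ∑ c : Fin n → D3, lam c * f c :=
    fun lam hd hm => le_trans hfle (hmin lam hd hm)
  have hle := hmax mu' hdist' hmarg' hmin'
  have hz := hsum (fun c => (zc c : ℝ) ^ 2)
  rw [hz] at hle
  have hprod : 0 < ε * ((zc (vmeet0 a b) : ℝ) ^ 2 + α * (zc (vjoin0 a b) : ℝ) ^ 2
      + (1 - α) * (zc (vjoin1 a b) : ℝ) ^ 2 - (zc a : ℝ) ^ 2 - (zc b : ℝ) ^ 2) :=
    mul_pos hε (by linarith only [hgain])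
  linarith only [hle, hprod]
lemma coord_split {n : ℕ} (μ : (Fin n → D3) → ℝ) (α : ℝ) (i : Fin n) :
    ∑ a : Fin n → D3, μ a * D3.emb α (a i)
      = (∑ a ∈ Finset.univ.filter (fun a => a i = D3.one), μ a)
        - α * (∑ a ∈ Finset.univ.filter (fun a => a i = D3.neg), μ a) := by
  rw [Finset.sum_filter, Finset.sum_filter, Finset.mul_sum, ← Finset.sum_sub_distrib]
  refine Finset.sum_congr rfl fun a _ => ?_
  cases h : a i <;> simp [D3.emb, h] <;> ring

lemma coord_mass {α : ℝ} (hα0 : 0 < α) {n : ℕ} {μ : (Fin n → D3) → ℝ} {x : Fin n → ℝ}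
    (hd : IsDist n μ) (hm : HasMarginal α n μ x) (hc : ChainSupp n μ) (i : Fin n) :
    (∑ a ∈ Finset.univ.filter (fun a => a i = D3.one), μ a) = max (x i) 0
    ∧ (∑ a ∈ Finset.univ.filter (fun a => a i = D3.neg), μ a) = max (-(x i)/α) 0 := by
  set P := ∑ a ∈ Finset.univ.filter (fun a => a i = D3.one), μ a with hPdef
  set N := ∑ a ∈ Finset.univ.filter (fun a => a i = D3.neg), μ a with hNdef
  have hPN : P - α * N = x i := by rw [hPdef, hNdef, ← coord_split]; exact hm i
  have hP0 : 0 ≤ P := Finset.sum_nonneg fun a _ => (hd.1 a).1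
  have hN0 : 0 ≤ N := Finset.sum_nonneg fun a _ => (hd.1 a).1
  have hor : P = 0 ∨ N = 0 := by
    by_contra hcon
    push_neg at hcon
    obtain ⟨a, haf, ha⟩ := Finset.exists_ne_zero_of_sum_ne_zero hcon.1
    obtain ⟨b, hbf, hb⟩ := Finset.exists_ne_zero_of_sum_ne_zero hcon.2
    simp only [Finset.mem_filter] at haf hbf
    rcases hc a b ha hb with h | h
    · have h' := h i
      rw [haf.2, hbf.2] at h'
      rcases (D3.le_iff _ _).mp h' with h'' | h'' <;> exact D3.noConfusion h''
    · have h' := h i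
      rw [haf.2, hbf.2] at h'
      rcases (D3.le_iff _ _).mp h' with h'' | h'' <;> exact D3.noConfusion h''
  rcases hor with h0 | h0
  · rw [h0] at hPN ⊢
    have hx : x i = -α * N := by linarith
    constructor
    · rw [max_eq_right]; linarith [mul_nonneg hα0.le hN0]
    · have hNe : -(x i)/α = N := by
        rw [hx]
        field_simp
      rw [hNe, max_eq_left hN0]
  · rw [h0] at hPN ⊢
    have hx : x i = P := by linarith
    constructor
    · rw [max_eq_left (hx ▸ hP0)]; exact hx.symm
    · rw [max_eq_right]
      apply div_nonpos_of_nonpos_of_nonneg <;> linarith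
instance : DecidableRel ((· ≤ ·) : D3 → D3 → Prop) :=
  fun u v => decidable_of_iff _ (D3.le_iff u v).symm

instance {n : ℕ} : DecidableRel ((· ≤ ·) : (Fin n → D3) → (Fin n → D3) → Prop) :=
  fun a b => decidable_of_iff _ (pi_le_iff a b).symm

lemma zc_lt_of_lt {n : ℕ} {a b : Fin n → D3} (hab : a ≤ b) (hne : a ≠ b) : zc b < zc a := by
  have hsub : (Finset.univ.filter fun i => b i = D3.zero)
      ⊆ (Finset.univ.filter fun i => a i = D3.zero) := by
    intro i hi
    simp only [Finset.mem_filter, Finset.mem_univ, true_and] at hi ⊢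
    rcases (D3.le_iff _ _).mp (hab i) with h | h
    · rw [h, hi]
    · exact h
  apply Finset.card_lt_card
  rw [Finset.ssubset_iff_of_subset hsub]
  have hex : ∃ i, a i ≠ b i := by
    by_contra hcon; push_neg at hcon; exact hne (funext hcon)
  obtain ⟨i, hi⟩ := hex
  have ha0 : a i = D3.zero := by
    rcases (D3.le_iff _ _).mp (hab i) with h | h
    · exact absurd h hi
    · exact h
  have hb0 : b i ≠ D3.zero := fun h => hi (by rw [ha0, h])
  exact ⟨i, by simp [ha0], by simp [hb0]⟩

lemma upset_mass {α : ℝ} (hα0 : 0 < α) {n : ℕ} {μ : (Fin n → D3) → ℝ} {x : Fin n → ℝ}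
    (hd : IsDist n μ) (hm : HasMarginal α n μ x) (hc : ChainSupp n μ) (a : Fin n → D3)
    (hS : (Finset.univ.filter fun i => a i ≠ D3.zero).Nonempty) :
    ∑ b ∈ Finset.univ.filter (fun b => a ≤ b), μ b
      = (Finset.univ.filter fun i => a i ≠ D3.zero).inf' hS
          (fun i => if a i = D3.one then max (x i) 0 else max (-(x i)/α) 0) := by
  classical
  have hFm : ∀ i ∈ (Finset.univ.filter fun i => a i ≠ D3.zero),
      (∑ b ∈ Finset.univ.filter (fun b => b i = a i), μ b)
        = (if a i = D3.one then max (x i) 0 else max (-(x i)/α) 0) := by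
    intro i hi
    simp only [Finset.mem_filter, Finset.mem_univ, true_and] at hi
    cases hval : a i with
    | zero => exact absurd hval hi
    | one =>
      rw [if_pos rfl, ← (coord_mass hα0 hd hm hc i).1]
    | neg =>
      rw [if_neg (fun h => D3.noConfusion h), ← (coord_mass hα0 hd hm hc i).2]
  apply le_antisymm
  · apply Finset.le_inf'
    intro i hi
    rw [← hFm i hi]
    apply Finset.sum_le_sum_of_subset_of_nonneg
    · intro b hb
      simp only [Finset.mem_filter, Finset.mem_univ, true_and] at hb ⊢
      simp only [Finset.mem_filter, Finset.mem_univ, true_and] at hi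
      rcases (D3.le_iff _ _).mp (hb i) with h | h
      · exact h.symm
      · exact absurd h hi
    · exact fun b _ _ => (hd.1 b).1
  · -- lower bound via card-minimal fiber
    set SA : Fin n → Finset (Fin n → D3) :=
      fun i => (Finset.univ.filter (fun b => b i = a i)).filter (fun b => μ b ≠ 0) with hSA
    obtain ⟨i₀, hi₀S, hmin⟩ :=
      Finset.exists_min_image (Finset.univ.filter fun i => a i ≠ D3.zero)
        (fun i => (SA i).card) hS
    have hmemSA : ∀ i, ∀ b, b ∈ SA i ↔ (b i = a i ∧ μ b ≠ 0) := by
      intro i b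
      simp [hSA, Finset.mem_filter]
    have hnest : ∀ i ∈ (Finset.univ.filter fun i => a i ≠ D3.zero),
        ∀ j ∈ (Finset.univ.filter fun i => a i ≠ D3.zero), SA i ⊆ SA j ∨ SA j ⊆ SA i := by
      intro i hi j hj
      simp only [Finset.mem_filter, Finset.mem_univ, true_and] at hi hj
      by_contra hcon
      push_neg at hcon
      rw [Finset.not_subset] at hcon
      obtain ⟨⟨b, hbi, hbj⟩, hcon2⟩ := hcon
      rw [Finset.not_subset] at hcon2
      obtain ⟨c, hcj, hci⟩ := hcon2
      rw [hmemSA] at hbi hcj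
      have hbj' : ¬ (b j = a j) := fun h => hbj ((hmemSA j b).mpr ⟨h, hbi.2⟩)
      have hci' : ¬ (c i = a i) := fun h => hci ((hmemSA i c).mpr ⟨h, hcj.2⟩)
      rcases hc b c hbi.2 hcj.2 with h | h
      · rcases (D3.le_iff _ _).mp (h i) with h' | h'
        · exact hci' (h' ▸ hbi.1)
        · exact hi (by rw [← hbi.1, h'])
      · rcases (D3.le_iff _ _).mp (h j) with h' | h'
        · exact hbj' (h' ▸ hcj.1)
        · exact hj (by rw [← hcj.1, h'])
    have hsub0 : ∀ j ∈ (Finset.univ.filter fun i => a i ≠ D3.zero), SA i₀ ⊆ SA j := by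
      intro j hj
      rcases hnest i₀ hi₀S j hj with h | h
      · exact h
      · rw [Finset.eq_of_subset_of_card_le h (hmin j hj)]
    have hsubU : SA i₀ ⊆ Finset.univ.filter (fun b => a ≤ b) := by
      intro b hb
      simp only [Finset.mem_filter, Finset.mem_univ, true_and]
      rw [pi_le_iff]
      intro i
      by_cases h0 : a i = D3.zero
      · exact Or.inr h0
      · have hiS : i ∈ Finset.univ.filter fun i => a i ≠ D3.zero := by simp [h0]
        exact Or.inl (((hmemSA i b).mp (hsub0 i hiS hb)).1.symm)
    calc (Finset.univ.filter fun i => a i ≠ D3.zero).inf' hS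
          (fun i => if a i = D3.one then max (x i) 0 else max (-(x i)/α) 0)
        ≤ (if a i₀ = D3.one then max (x i₀) 0 else max (-(x i₀)/α) 0) :=
          Finset.inf'_le _ hi₀S
      _ = ∑ b ∈ Finset.univ.filter (fun b => b i₀ = a i₀), μ b := (hFm i₀ hi₀S).symm
      _ = ∑ b ∈ SA i₀, μ b := (Finset.sum_filter_ne_zero _).symm
      _ ≤ ∑ b ∈ Finset.univ.filter (fun b => a ≤ b), μ b :=
          Finset.sum_le_sum_of_subset_of_nonneg hsubU (fun b _ _ => (hd.1 b).1)

lemma chain_eq {α : ℝ} (hα0 : 0 < α) {n : ℕ} {μ lam : (Fin n → D3) → ℝ} {x : Fin n → ℝ}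
    (hdμ : IsDist n μ) (hmμ : HasMarginal α n μ x) (hcμ : ChainSupp n μ)
    (hdl : IsDist n lam) (hml : HasMarginal α n lam x) (hcl : ChainSupp n lam) :
    μ = lam := by
  classical
  have key : ∀ k, ∀ a : Fin n → D3, zc a = k → μ a = lam a := by
    intro k
    induction k using Nat.strong_induction_on with
    | _ k ih =>
      intro a hk
      have hU : ∑ b ∈ Finset.univ.filter (fun b => a ≤ b), μ b
          = ∑ b ∈ Finset.univ.filter (fun b => a ≤ b), lam b := by
        by_cases hS : (Finset.univ.filter fun i => a i ≠ D3.zero).Nonempty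
        · rw [upset_mass hα0 hdμ hmμ hcμ a hS, upset_mass hα0 hdl hml hcl a hS]
        · have hall : ∀ b, a ≤ b := by
            intro b
            rw [pi_le_iff]
            intro i
            right
            by_contra h0
            exact hS ⟨i, by simp [h0]⟩
          rw [Finset.filter_true_of_mem (fun b _ => hall b)]
          rw [hdμ.2, hdl.2]
      have hmem : a ∈ Finset.univ.filter (fun b => a ≤ b) := by simp
      rw [← Finset.add_sum_erase _ μ hmem, ← Finset.add_sum_erase _ lam hmem] at hU
      have herase : ∑ b ∈ (Finset.univ.filter (fun b => a ≤ b)).erase a, μ b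
          = ∑ b ∈ (Finset.univ.filter (fun b => a ≤ b)).erase a, lam b := by
        refine Finset.sum_congr rfl fun b hb => ?_
        rw [Finset.mem_erase, Finset.mem_filter] at hb
        have hlt : zc b < k := hk ▸ zc_lt_of_lt hb.2.2 (Ne.symm hb.1)
        exact ih (zc b) hlt b rfl
      linarith [hU, herase]
  funext a
  exact key (zc a) a rfl
/-- among the minimizers of `Σ λ(a) f(a)`, any one maximizing
`Σ λ(a) z(a)²` is chain-supported, hence equals `λ_x`. -/
theorem stmt15 (α : ℝ) (hα : α ∈ Set.Ioc (0 : ℝ) 1) (n : ℕ) (f : (Fin n → D3) → ℝ)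
    (hf : AlphaBisub α n f) (x : Fin n → ℝ) (hx : x ∈ Box α n)
    (mu : (Fin n → D3) → ℝ)
    (h1 : IsDist n mu) (h2 : HasMarginal α n mu x)
    (hmin : ∀ lam : (Fin n → D3) → ℝ, IsDist n lam → HasMarginal α n lam x →
      ∑ a : Fin n → D3, mu a * f a ≤ ∑ a : Fin n → D3, lam a * f a)
    (hmax : ∀ lam : (Fin n → D3) → ℝ, IsDist n lam → HasMarginal α n lam x →
      (∀ lam' : (Fin n → D3) → ℝ, IsDist n lam' → HasMarginal α n lam' x →
        ∑ a : Fin n → D3, lam a * f a ≤ ∑ a : Fin n → D3, lam' a * f a) →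
      ∑ a : Fin n → D3, lam a * (zc a : ℝ) ^ 2 ≤ ∑ a : Fin n → D3, mu a * (zc a : ℝ) ^ 2) :
    ChainSupp n mu ∧
    ∀ lam : (Fin n → D3) → ℝ, IsDist n lam → HasMarginal α n lam x → ChainSupp n lam →
      mu = lam := by
  have hchain := chain_of_opt α hα n f hf x mu h1 h2 hmin hmax
  exact ⟨hchain, fun lam hdl hml hcl => chain_eq hα.1 h1 h2 hchain hdl hml hcl⟩
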